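/- Let q, p ∈ ℝ² with q ≠ 0 and K(q,p) := ‖p‖²/2 - 1/‖q‖ < 0. With φ = -√(-2K)·⟨q,p⟩, u = (√(-2K)·‖q‖·p, ‖p‖²‖q‖ - 1) ∈ ℝ³, v = (-q/‖q‖ + ⟨q,p⟩·p, -√(-2K)·⟨q,p⟩) ∈ ℝ³, r = (cos φ)·u + (sin φ)·v, and s = (1/√(-2K))·(-(sin φ)·u + (cos φ)·v), one has |r₁s₂ - r₂s₁| = |p₁q₂ - p₂q₁|. -/

import Mathlib

open RealInnerProductSpace

/-- The planar Ligon-Schaaf map preserves the magnitude of the angular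
momentum: `|r₁s₂ - r₂s₁| = |p₁q₂ - p₂q₁|`. -/
theorem ligonSchaaf_angularMomentum (q p : EuclideanSpace ℝ (Fin 2))
    (hq : q ≠ 0) (hK : ‖p‖ ^ 2 / 2 - 1 / ‖q‖ < 0) :
    let K : ℝ := ‖p‖ ^ 2 / 2 - 1 / ‖q‖
    let φ : ℝ := -(Real.sqrt (-2 * K) * ⟪q, p⟫)
    let u : EuclideanSpace ℝ (Fin 3) :=
      !₂[Real.sqrt (-2 * K) * ‖q‖ * p 0, Real.sqrt (-2 * K) * ‖q‖ * p 1,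
        ‖p‖ ^ 2 * ‖q‖ - 1]
    let v : EuclideanSpace ℝ (Fin 3) :=
      !₂[-(‖q‖⁻¹ * q 0) + ⟪q, p⟫ * p 0, -(‖q‖⁻¹ * q 1) + ⟪q, p⟫ * p 1,
        -(Real.sqrt (-2 * K) * ⟪q, p⟫)]
    let r := Real.cos φ • u + Real.sin φ • v
    let s := (Real.sqrt (-2 * K))⁻¹ • (-(Real.sin φ • u) + Real.cos φ • v)
    |r 0 * s 1 - r 1 * s 0| = |p 0 * q 1 - p 1 * q 0| := by
  intro K φ u v r s
  have hK' : K < 0 := hK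
  have hα : (0:ℝ) < Real.sqrt (-2 * K) := Real.sqrt_pos.2 (by linarith)
  have hα' : Real.sqrt (-2 * K) ≠ 0 := ne_of_gt hα
  have hq' : ‖q‖ ≠ 0 := norm_ne_zero_iff.2 hq
  have hpc : Real.sin φ ^ 2 + Real.cos φ ^ 2 = 1 := Real.sin_sq_add_cos_sq φ
  have h : r 0 * s 1 - r 1 * s 0 = -(p 0 * q 1 - p 1 * q 0) := by
    simp only [r, s, u, v, PiLp.add_apply, PiLp.smul_apply, PiLp.neg_apply,
      smul_eq_mul, Matrix.cons_val_zero, Matrix.cons_val_one, Matrix.head_cons]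
    set a := Real.sqrt (-2 * K) with ha
    set b := ‖q‖ with hb
    field_simp
    linear_combination (-(a * b ^ 2) * (p 0 * q 1 - q 0 * p 1)) * hpc
  rw [h, abs_neg]
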